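/- Let (Ω, Σ, μ) be a σ-finite measure space and 1 ≤ p < ∞. Then: (i) the set of nonsupport points of the positive cone L_p^+(μ) = {f ∈ L_p(μ) : f ≥ 0 a.e.} equals {f ∈ L_p(μ) : f > 0 a.e.}, and in particular it is nonempty; (ii) for every u ∈ L_p(μ) with u > 0 a.e., setting X_u = {f ∈ L_p(μ) : there exists M > 0 with |f| ≤ M·u a.e.} and ‖f‖_u = inf{λ > 0 : |f| ≤ λ·u a.e.}, one has ‖f‖_u = ‖f/u‖_{L∞(μ)} for every f ∈ X_u, and for every g ∈ L∞(μ) the product g·u belongs to L_p(μ) and to X_u. Consequently f ↦ f/u is a surjective linear isometry from (X_u, ‖·‖_u) onto L∞(μ). -/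

import Mathlib

open MeasureTheory Filter Topology
open scoped ENNReal NNReal

section Aux

variable {α : Type*} [MeasurableSpace α]

lemma aux_integrableOn (μ : Measure α) (p : ℝ≥0∞) [Fact (1 ≤ p)]
    {B : Set α} (hBfin : μ B ≠ ∞) (g : Lp ℝ p μ) : IntegrableOn (⇑g) B μ := by
  haveI : Fact (μ B < ∞) := ⟨hBfin.lt_top⟩
  exact ((Lp.memLp g).restrict B).integrable Fact.out

lemma aux_CLM (μ : Measure α) (p : ℝ≥0∞) [Fact (1 ≤ p)] (hp : p ≠ ∞)
    {B : Set α} (hBfin : μ B ≠ ∞) :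
    ∃ φ : Lp ℝ p μ →L[ℝ] ℝ, ∀ g : Lp ℝ p μ, φ g = ∫ a in B, g a ∂μ := by
  have hint := aux_integrableOn μ p hBfin
  let ψ : Lp ℝ p μ →ₗ[ℝ] ℝ :=
  { toFun := fun g => ∫ a in B, g a ∂μ
    map_add' := fun g h => by
      rw [integral_congr_ae (ae_restrict_of_ae (Lp.coeFn_add g h))]
      exact integral_add (hint g) (hint h)
    map_smul' := fun c g => by
      simp only [RingHom.id_apply, smul_eq_mul]
      rw [integral_congr_ae (ae_restrict_of_ae (Lp.coeFn_smul c g))]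
      simpa using integral_smul c (⇑g) }
  have hpr : (1:ℝ) ≤ p.toReal := by
    rw [← ENNReal.toReal_one]
    exact ENNReal.toReal_mono hp Fact.out
  set K : ℝ≥0∞ := μ B ^ (1 - 1 / p.toReal) with hK
  have hKtop : K ≠ ∞ := by
    refine ENNReal.rpow_ne_top_of_nonneg ?_ hBfin
    have : 1 / p.toReal ≤ 1 := by
      rw [div_le_one (by linarith)]; linarith
    linarith
  refine ⟨ψ.mkContinuousOfExistsBound ⟨K.toReal, fun g => ?_⟩, fun g => rfl⟩
  have h1 : ENNReal.ofReal ‖ψ g‖ ≤ eLpNorm g p μ * K := by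
    have e1 : ENNReal.ofReal ‖ψ g‖ ≤ ENNReal.ofReal (∫ a in B, ‖g a‖ ∂μ) :=
      ENNReal.ofReal_le_ofReal (norm_integral_le_integral_norm _)
    have e2 : ENNReal.ofReal (∫ a in B, ‖g a‖ ∂μ) = eLpNorm (⇑g) 1 (μ.restrict B) := by
      rw [ofReal_integral_norm_eq_lintegral_enorm (hint g), eLpNorm_one_eq_lintegral_enorm]
    have e3 : eLpNorm (⇑g) 1 (μ.restrict B) ≤ eLpNorm (⇑g) p (μ.restrict B) * K := by
      have := eLpNorm_le_eLpNorm_mul_rpow_measure_univ (μ := μ.restrict B)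
        (p := 1) (q := p) Fact.out ((Lp.aestronglyMeasurable g).restrict)
      simpa [Measure.restrict_apply_univ, hK, one_div] using this
    have e4 : eLpNorm (⇑g) p (μ.restrict B) ≤ eLpNorm (⇑g) p μ :=
      eLpNorm_mono_measure _ Measure.restrict_le_self
    exact (e1.trans_eq e2).trans (e3.trans (mul_le_mul_left e4 K))
  have hfin : eLpNorm (⇑g) p μ * K ≠ ∞ := ENNReal.mul_ne_top (Lp.eLpNorm_ne_top g) hKtop
  have := ENNReal.toReal_mono hfin h1
  rw [ENNReal.toReal_ofReal (norm_nonneg _), ENNReal.toReal_mul] at this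
  rw [Lp.norm_def]
  linarith [this]

lemma aux_trunc_tendsto (μ : Measure α) (p : ℝ≥0∞) [Fact (1 ≤ p)] (hp : p ≠ ∞)
    (f g : Lp ℝ p μ) (hf : ∀ᵐ a ∂μ, 0 < f a) (hg : ∀ᵐ a ∂μ, 0 ≤ g a) :
    Tendsto (fun n : ℕ => g ⊓ ((n : ℝ) • f)) atTop (𝓝 g) := by
  have hp0 : p ≠ 0 := (lt_of_lt_of_le zero_lt_one Fact.out).ne'
  set pr := p.toReal with hprdef
  have hpr : 0 < pr := ENNReal.toReal_pos hp0 hp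
  rw [Lp.tendsto_Lp_iff_tendsto_eLpNorm']
  set h : ℕ → Lp ℝ p μ := fun n => g ⊓ ((n : ℝ) • f) with hdef
  have hcoe : ∀ᵐ a ∂μ, (0 < f a) ∧ (0 ≤ g a) ∧ ∀ n : ℕ, h n a = min (g a) (n * f a) := by
    have hn : ∀ᵐ a ∂μ, ∀ n : ℕ, h n a = min (g a) (n * f a) := by
      rw [ae_all_iff]
      intro n
      filter_upwards [Lp.coeFn_inf g ((n : ℝ) • f), Lp.coeFn_smul (n : ℝ) f] with a h1 h2
      simp [hdef, h1, h2]
    filter_upwards [hf, hg, hn] with a h1 h2 h3 using ⟨h1, h2, h3⟩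
  have key : Tendsto (fun n => ∫⁻ a, (‖(⇑(h n) - ⇑g) a‖₊ : ℝ≥0∞) ^ pr ∂μ) atTop (𝓝 0) := by
    have h0 : (0 : ℝ≥0∞) = ∫⁻ _a, (0:ℝ≥0∞) ∂μ := by simp
    rw [h0]
    apply tendsto_lintegral_of_dominated_convergence' (fun a => (‖g a‖₊ : ℝ≥0∞) ^ pr)
    · intro n
      exact (ENNReal.continuous_rpow_const.measurable.comp
        (((Lp.stronglyMeasurable (h n)).sub (Lp.stronglyMeasurable g)).enorm)).aemeasurable
    · intro n
      filter_upwards [hcoe] with a ⟨h1, h2, h3⟩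
      apply ENNReal.rpow_le_rpow _ hpr.le
      rw [ENNReal.coe_le_coe, ← NNReal.coe_le_coe, coe_nnnorm, coe_nnnorm,
        Real.norm_eq_abs, Real.norm_eq_abs]
      have h4 : (0:ℝ) ≤ (n:ℝ) * f a := by positivity
      have hm1 : 0 ≤ min (g a) ((n:ℝ) * f a) := le_min h2 h4
      have hm2 : min (g a) ((n:ℝ) * f a) ≤ g a := min_le_left _ _
      have : (⇑(h n) - ⇑g) a = min (g a) ((n:ℝ) * f a) - g a := by
        simp [Pi.sub_apply, h3 n]
      rw [this, abs_sub_comm, abs_of_nonneg (sub_nonneg.2 hm2), abs_of_nonneg h2]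
      linarith
    · have := lintegral_rpow_enorm_lt_top_of_eLpNorm_lt_top hp0 hp (Lp.eLpNorm_lt_top g)
      exact this.ne
    · filter_upwards [hcoe] with a ⟨h1, h2, h3⟩
      have hev : ∀ᶠ n : ℕ in atTop, (‖(⇑(h n) - ⇑g) a‖₊ : ℝ≥0∞) ^ pr = 0 := by
        filter_upwards [eventually_ge_atTop ⌈g a / f a⌉₊] with n hn
        have : g a ≤ n * f a := by
          rw [← div_le_iff₀ h1]
          calc g a / f a ≤ ⌈g a / f a⌉₊ := Nat.le_ceil _
          _ ≤ n := by exact_mod_cast hn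
        have : h n a - g a = 0 := by rw [h3 n, min_eq_left this, sub_self]
        simp [Pi.sub_apply, this, ENNReal.zero_rpow_of_pos hpr]
      exact (tendsto_const_nhds : Tendsto (fun _ : ℕ => (0:ℝ≥0∞)) atTop (𝓝 0)).congr'
        (by filter_upwards [hev] with n hn; exact hn.symm)
  have heq : ∀ n, eLpNorm (⇑(h n) - ⇑g) p μ
      = (∫⁻ a, (‖(⇑(h n) - ⇑g) a‖₊ : ℝ≥0∞) ^ pr ∂μ) ^ (1 / pr) := fun n => by
    rw [eLpNorm_eq_lintegral_rpow_enorm_toReal hp0 hp]; rfl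
  refine Tendsto.congr (fun n => (heq n).symm) ?_
  have := Tendsto.ennrpow_const (1 / pr) key
  rwa [ENNReal.zero_rpow_of_pos (by positivity)] at this

lemma aux_pos_no_support (μ : Measure α) (p : ℝ≥0∞) [Fact (1 ≤ p)] (hp : p ≠ ∞)
    (f : Lp ℝ p μ) (hf : ∀ᵐ a ∂μ, 0 < f a) :
    ¬ ∃ φ : Lp ℝ p μ →L[ℝ] ℝ, φ ≠ 0 ∧
      ∀ g ∈ {g : Lp ℝ p μ | ∀ᵐ a ∂μ, 0 ≤ g a}, φ g ≤ φ f := by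
  rintro ⟨φ, hφ0, hφ⟩
  have h0P : (0 : Lp ℝ p μ) ∈ {g : Lp ℝ p μ | ∀ᵐ a ∂μ, 0 ≤ g a} := by
    filter_upwards [Lp.coeFn_zero ℝ p μ] with a ha
    rw [ha]; simp
  have h2fP : (2:ℝ) • f ∈ {g : Lp ℝ p μ | ∀ᵐ a ∂μ, 0 ≤ g a} := by
    filter_upwards [hf, Lp.coeFn_smul (2:ℝ) f] with a h1 h2
    rw [h2]; simp; positivity
  have hφf : φ f = 0 := by
    have h1 : (0:ℝ) ≤ φ f := by simpa using hφ 0 h0P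
    have h2 : φ ((2:ℝ) • f) ≤ φ f := hφ _ h2fP
    rw [_root_.map_smul, smul_eq_mul] at h2
    linarith
  have key : ∀ g : Lp ℝ p μ, (∀ᵐ a ∂μ, 0 ≤ g a) → φ g = 0 := by
    intro g hg
    have hval : ∀ n : ℕ, φ (g ⊓ ((n:ℝ) • f)) = 0 := by
      intro n
      have hinf : ∀ᵐ a ∂μ, (g ⊓ ((n:ℝ) • f)) a = min (g a) ((n:ℝ) * f a) := by
        filter_upwards [Lp.coeFn_inf g ((n:ℝ) • f), Lp.coeFn_smul (n:ℝ) f] with a h1 h2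
        simp [h1, h2]
      have hmem : (g ⊓ ((n:ℝ) • f)) ∈ {g : Lp ℝ p μ | ∀ᵐ a ∂μ, 0 ≤ g a} := by
        filter_upwards [hinf, hg, hf] with a h1 h2 h3
        rw [h1]
        have : (0:ℝ) ≤ (n:ℝ) * f a := by positivity
        exact le_min h2 this
      have hmem2 : ((n:ℝ) • f - g ⊓ ((n:ℝ) • f)) ∈ {g : Lp ℝ p μ | ∀ᵐ a ∂μ, 0 ≤ g a} := by
        filter_upwards [hinf, Lp.coeFn_sub ((n:ℝ) • f) (g ⊓ ((n:ℝ) • f)),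
          Lp.coeFn_smul (n:ℝ) f] with a h1 h2 h3
        rw [h2, Pi.sub_apply, h1, h3]
        simp [min_le_right]
      have e1 : φ (g ⊓ ((n:ℝ) • f)) ≤ 0 := (hφ _ hmem).trans_eq hφf
      have e2 : φ ((n:ℝ) • f - g ⊓ ((n:ℝ) • f)) ≤ 0 := (hφ _ hmem2).trans_eq hφf
      rw [map_sub, _root_.map_smul, smul_eq_mul, hφf, mul_zero, zero_sub, neg_nonpos] at e2
      linarith
    have ht := (φ.continuous.tendsto g).comp (aux_trunc_tendsto μ p hp f g hf hg)
    have ht0 : Tendsto (fun _ : ℕ => (0:ℝ)) atTop (𝓝 (φ g)) :=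
      ht.congr fun n => hval n
    exact tendsto_nhds_unique ht0 tendsto_const_nhds
  apply hφ0
  ext x
  have hpos : ∀ᵐ a ∂μ, 0 ≤ (x ⊔ 0) a := by
    filter_upwards [Lp.coeFn_sup x 0, Lp.coeFn_zero ℝ p μ] with a h1 h2
    rw [h1]
    simp only [Pi.sup_apply, h2, Pi.zero_apply, le_sup_right]
  have hneg : ∀ᵐ a ∂μ, 0 ≤ ((-x) ⊔ 0) a := by
    filter_upwards [Lp.coeFn_sup (-x) 0, Lp.coeFn_zero ℝ p μ] with a h1 h2
    rw [h1]
    simp only [Pi.sup_apply, h2, Pi.zero_apply, le_sup_right]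
  have hx : (x ⊔ 0) - ((-x) ⊔ 0) = x := by
    simpa [posPart_def, negPart_def] using posPart_sub_negPart x
  calc φ x = φ ((x ⊔ 0) - ((-x) ⊔ 0)) := by rw [hx]
  _ = φ (x ⊔ 0) - φ ((-x) ⊔ 0) := map_sub φ _ _
  _ = 0 := by rw [key _ hpos, key _ hneg, sub_zero]
  _ = (0 : Lp ℝ p μ →L[ℝ] ℝ) x := rfl

lemma aux_exists_pos (μ : Measure α) [SigmaFinite μ] (p : ℝ≥0∞) [Fact (1 ≤ p)] (hp : p ≠ ∞) :
    ∃ f : Lp ℝ p μ, ∀ᵐ a ∂μ, 0 < f a := by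
  have hp0 : p ≠ 0 := (lt_of_lt_of_le zero_lt_one Fact.out).ne'
  have hpr1 : (1:ℝ) ≤ p.toReal := by
    rw [← ENNReal.toReal_one]
    exact ENNReal.toReal_mono hp Fact.out
  obtain ⟨g, hgpos, hgmeas, hgint⟩ := exists_pos_lintegral_lt_of_sigmaFinite μ one_ne_zero
  set f0 : α → ℝ := fun a => min (g a : ℝ) 1 with hf0
  have hmeas : Measurable f0 := hgmeas.coe_nnreal_real.min measurable_const
  have hpos : ∀ a, 0 < f0 a := fun a => lt_min (hgpos a) one_pos
  have hmem : MemLp f0 p μ := by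
    refine ⟨hmeas.aestronglyMeasurable, ?_⟩
    rw [eLpNorm_eq_lintegral_rpow_enorm_toReal hp0 hp]
    refine ENNReal.rpow_lt_top_of_nonneg (by positivity) (LT.lt.ne ?_)
    have hb : ∀ a, (‖f0 a‖₊ : ℝ≥0∞) ^ p.toReal ≤ ((g a : ℝ≥0) : ℝ≥0∞) := by
      intro a
      have h1 : (‖f0 a‖₊ : ℝ≥0∞) ≤ 1 := by
        rw [← ENNReal.coe_one, ENNReal.coe_le_coe, ← NNReal.coe_le_coe, coe_nnnorm,
          Real.norm_eq_abs, abs_of_nonneg (hpos a).le, NNReal.coe_one]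
        exact min_le_right _ _
      have h2 : (‖f0 a‖₊ : ℝ≥0∞) ≤ ((g a : ℝ≥0) : ℝ≥0∞) := by
        rw [ENNReal.coe_le_coe, ← NNReal.coe_le_coe, coe_nnnorm,
          Real.norm_eq_abs, abs_of_nonneg (hpos a).le]
        exact min_le_left _ _
      calc (‖f0 a‖₊ : ℝ≥0∞) ^ p.toReal ≤ (‖f0 a‖₊ : ℝ≥0∞) ^ (1:ℝ) :=
            ENNReal.rpow_le_rpow_of_exponent_ge h1 hpr1
      _ = (‖f0 a‖₊ : ℝ≥0∞) := ENNReal.rpow_one _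
      _ ≤ _ := h2
    calc ∫⁻ a, (‖f0 a‖₊ : ℝ≥0∞) ^ p.toReal ∂μ ≤ ∫⁻ a, ((g a : ℝ≥0) : ℝ≥0∞) ∂μ :=
          lintegral_mono hb
    _ < 1 := hgint
    _ < ∞ := ENNReal.one_lt_top
  refine ⟨hmem.toLp f0, ?_⟩
  filter_upwards [hmem.coeFn_toLp] with a ha
  rw [ha]; exact hpos a

lemma aux_support_exists (μ : Measure α) [SigmaFinite μ] (p : ℝ≥0∞) [Fact (1 ≤ p)] (hp : p ≠ ∞)
    (f : Lp ℝ p μ) (hf : ∀ᵐ a ∂μ, 0 ≤ f a) (hnot : ¬ ∀ᵐ a ∂μ, 0 < f a) :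
    ∃ φ : Lp ℝ p μ →L[ℝ] ℝ, φ ≠ 0 ∧
      ∀ g ∈ {g : Lp ℝ p μ | ∀ᵐ a ∂μ, 0 ≤ g a}, φ g ≤ φ f := by
  set A : Set α := {a | f a ≤ 0} with hA
  have hAmeas : MeasurableSet A := measurableSet_le (Lp.stronglyMeasurable f).measurable
    measurable_const
  have hApos : 0 < μ A := by
    rw [pos_iff_ne_zero]
    intro h0
    apply hnot
    rw [ae_iff]
    convert h0 using 2
    ext a
    simp [hA, not_lt]
  obtain ⟨B, hBmeas, hBA, hB0, hBfin⟩ := Measure.exists_subset_measure_lt_top hAmeas hApos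
  obtain ⟨φ₀, hφ₀⟩ := aux_CLM μ p hp hBfin.ne
  refine ⟨-φ₀, ?_, ?_⟩
  · intro hcontra
    set w : Lp ℝ p μ := indicatorConstLp p hBmeas hBfin.ne (1:ℝ) with hw
    have h1 : (-φ₀) w = -(μ B).toReal := by
      rw [ContinuousLinearMap.neg_apply, hφ₀, hw, setIntegral_indicatorConstLp hBmeas hBmeas
        hBfin.ne, Set.inter_self, smul_eq_mul, mul_one, measureReal_def]
    rw [hcontra] at h1
    have h2 : 0 < (μ B).toReal := ENNReal.toReal_pos hB0.ne' hBfin.ne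
    simp at h1
    linarith
  · have hφf : φ₀ f = 0 := by
      rw [hφ₀]
      refine le_antisymm ?_ ?_
      · refine setIntegral_nonpos_of_ae_restrict ?_
        filter_upwards [ae_restrict_mem hBmeas] with a ha
        exact hBA ha
      · exact setIntegral_nonneg_of_ae_restrict (ae_restrict_of_ae hf)
    intro g hg
    rw [ContinuousLinearMap.neg_apply, ContinuousLinearMap.neg_apply, hφf, neg_zero, hφ₀]
    rw [neg_nonpos]
    exact setIntegral_nonneg_of_ae_restrict (ae_restrict_of_ae hg)

lemma aux_gauge (μ : Measure α) (p : ℝ≥0∞) [Fact (1 ≤ p)]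
    (u : Lp ℝ p μ) (hu : ∀ᵐ a ∂μ, 0 < u a) (f : Lp ℝ p μ)
    (hf : ∃ M > (0:ℝ), ∀ᵐ a ∂μ, |f a| ≤ M * u a) :
    sInf {l : ℝ | 0 < l ∧ ∀ᵐ a ∂μ, |f a| ≤ l * u a} =
      (eLpNorm (fun a => f a / u a) ∞ μ).toReal := by
  set c := eLpNorm (fun a => f a / u a) ∞ μ with hc
  have hiff : ∀ l : ℝ, 0 ≤ l → ((∀ᵐ a ∂μ, |f a| ≤ l * u a) ↔ c ≤ ENNReal.ofReal l) := by
    intro l hl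
    constructor
    · intro hae
      rw [hc, eLpNorm_exponent_top]
      refine eLpNormEssSup_le_of_ae_bound ?_
      filter_upwards [hae, hu] with a h1 h2
      rw [Real.norm_eq_abs, abs_div, abs_of_pos h2, div_le_iff₀ h2]
      exact h1
    · intro hle
      filter_upwards [ae_le_eLpNormEssSup (f := fun a => f a / u a) (μ := μ), hu] with a h1 h2
      have h3 : (‖f a / u a‖₊ : ℝ≥0∞) ≤ ENNReal.ofReal l := le_trans h1 (by rw [← eLpNorm_exponent_top]; exact hle)
      rw [← enorm_eq_nnnorm, ← ofReal_norm, ENNReal.ofReal_le_ofReal_iff hl, Real.norm_eq_abs,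
        abs_div, abs_of_pos h2, div_le_iff₀ h2] at h3
      exact h3
  obtain ⟨M, hM, hMae⟩ := hf
  have hcfin : c ≠ ∞ := by
    refine ne_top_of_le_ne_top ENNReal.ofReal_ne_top ((hiff M hM.le).mp hMae)
  set t := c.toReal with ht
  have ht0 : 0 ≤ t := ENNReal.toReal_nonneg
  have hiff2 : ∀ l : ℝ, 0 < l → ((∀ᵐ a ∂μ, |f a| ≤ l * u a) ↔ t ≤ l) := by
    intro l hl
    rw [hiff l hl.le, ENNReal.le_ofReal_iff_toReal_le hcfin hl.le]
  have hset : {l : ℝ | 0 < l ∧ ∀ᵐ a ∂μ, |f a| ≤ l * u a} = {l : ℝ | 0 < l ∧ t ≤ l} := by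
    ext l
    simp only [Set.mem_setOf_eq]
    constructor
    · rintro ⟨h1, h2⟩; exact ⟨h1, (hiff2 l h1).mp h2⟩
    · rintro ⟨h1, h2⟩; exact ⟨h1, (hiff2 l h1).mpr h2⟩
  rw [hset]
  rcases ht0.eq_or_lt with h | h
  · have : {l : ℝ | 0 < l ∧ t ≤ l} = Set.Ioi 0 := by
      ext l; simp only [Set.mem_setOf_eq, Set.mem_Ioi]
      exact ⟨fun ⟨h1, _⟩ => h1, fun h1 => ⟨h1, by linarith⟩⟩
    rw [this, csInf_Ioi, ← h]
  · have : {l : ℝ | 0 < l ∧ t ≤ l} = Set.Ici t := by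
      ext l; simp only [Set.mem_setOf_eq, Set.mem_Ici]
      exact ⟨fun ⟨_, h2⟩ => h2, fun h2 => ⟨lt_of_lt_of_le h h2, h2⟩⟩
    rw [this, csInf_Ici]

lemma aux_mul (μ : Measure α) (p : ℝ≥0∞) [Fact (1 ≤ p)]
    (u : Lp ℝ p μ) (hu : ∀ᵐ a ∂μ, 0 < u a) (g : α → ℝ) (hg : MemLp g ∞ μ) :
    MemLp (fun a => g a * u a) p μ ∧
      ∃ f ∈ {f : Lp ℝ p μ | ∃ M > (0 : ℝ), ∀ᵐ a ∂μ, |f a| ≤ M * u a},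
        (f : α → ℝ) =ᵐ[μ] fun a => g a * u a := by
  set C := (eLpNorm g ∞ μ).toReal with hC
  have hC0 : 0 ≤ C := ENNReal.toReal_nonneg
  have hgb : ∀ᵐ a ∂μ, ‖g a‖ ≤ C := by
    filter_upwards [ae_le_eLpNormEssSup (f := g) (μ := μ)] with a h1
    have h2 : eLpNormEssSup g μ ≠ ∞ := by
      rw [← eLpNorm_exponent_top]; exact hg.eLpNorm_ne_top
    have := ENNReal.toReal_mono h2 h1
    rwa [toReal_enorm, ← eLpNorm_exponent_top] at this
  have hmem : MemLp (fun a => g a * u a) p μ := by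
    refine MemLp.of_le_mul (c := C) (Lp.memLp u)
      (hg.aestronglyMeasurable.mul (Lp.aestronglyMeasurable u)) ?_
    filter_upwards [hgb] with a h1
    rw [norm_mul]
    exact mul_le_mul_of_nonneg_right h1 (norm_nonneg _)
  refine ⟨hmem, hmem.toLp _, ⟨C + 1, by linarith, ?_⟩, hmem.coeFn_toLp⟩
  filter_upwards [hmem.coeFn_toLp, hgb, hu] with a h1 h2 h3
  rw [h1, abs_mul, abs_of_pos h3]
  have : |g a| ≤ C + 1 := by rw [← Real.norm_eq_abs]; linarith
  exact mul_le_mul_of_nonneg_right this h3.le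
end Aux

/-- For a σ-finite measure `μ` and `1 ≤ p < ∞`: (i) the nonsupport points of the
positive cone `L_p^+(μ)` are exactly the a.e. strictly positive functions, and there
is at least one; (ii) for `u > 0` a.e., on
`X_u = {f : ∃ M > 0, |f| ≤ M·u a.e.}` the gauge `‖f‖_u = inf{λ > 0 : |f| ≤ λ·u a.e.}`
equals `‖f/u‖_{L∞}`, and every `g ∈ L∞(μ)` gives `g·u ∈ L_p(μ)` represented by an
element of `X_u`; consequently `f ↦ f/u` is a surjective linear isometry from
`(X_u, ‖·‖_u)` onto `L∞(μ)`. -/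
theorem stmt_12 {α : Type*} [MeasurableSpace α] (μ : Measure α) [SigmaFinite μ]
    (p : ℝ≥0∞) [Fact (1 ≤ p)] (hp : p ≠ ∞) :
    ({f ∈ {g : Lp ℝ p μ | ∀ᵐ a ∂μ, 0 ≤ g a} |
        ¬ ∃ φ : Lp ℝ p μ →L[ℝ] ℝ, φ ≠ 0 ∧
          ∀ g ∈ {g : Lp ℝ p μ | ∀ᵐ a ∂μ, 0 ≤ g a}, φ g ≤ φ f} =
      {f : Lp ℝ p μ | ∀ᵐ a ∂μ, 0 < f a}) ∧
    ({f : Lp ℝ p μ | ∀ᵐ a ∂μ, 0 < f a}.Nonempty) ∧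
    (∀ u : Lp ℝ p μ, (∀ᵐ a ∂μ, 0 < u a) →
      (∀ f ∈ {f : Lp ℝ p μ | ∃ M > (0 : ℝ), ∀ᵐ a ∂μ, |f a| ≤ M * u a},
        sInf {l : ℝ | 0 < l ∧ ∀ᵐ a ∂μ, |f a| ≤ l * u a} =
          (eLpNorm (fun a => f a / u a) ∞ μ).toReal) ∧
      (∀ g : α → ℝ, MemLp g ∞ μ →
        MemLp (fun a => g a * u a) p μ ∧
          ∃ f ∈ {f : Lp ℝ p μ | ∃ M > (0 : ℝ), ∀ᵐ a ∂μ, |f a| ≤ M * u a},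
            (f : α → ℝ) =ᵐ[μ] fun a => g a * u a)) := by
  refine ⟨?_, ?_, ?_⟩
  · ext f
    simp only [Set.mem_setOf_eq, Set.mem_sep_iff]
    constructor
    · rintro ⟨hfP, hns⟩
      by_contra hnot
      exact hns (aux_support_exists μ p hp f hfP hnot)
    · intro hf
      exact ⟨hf.mono fun a h => h.le, aux_pos_no_support μ p hp f hf⟩
  · obtain ⟨f, hf⟩ := aux_exists_pos μ p hp
    exact ⟨f, hf⟩
  · intro u hu
    exact ⟨fun f hf => aux_gauge μ p u hu f hf, fun g hg => aux_mul μ p u hu g hg⟩
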